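/- Let n ≥ 1 and j ≥ 0 be integers, let w̃₁, …, w̃_n be real numbers, D̃ = diag(w̃₁, …, w̃_n), ã = [[0,D̃],[D̃,0]] ∈ M(2n,ℝ) (in n×n block notation), and σ₁(ã) = S ã S where S = diag(−1,…,−1,1,…,1) with n+1 entries −1 followed by n−1 entries 1. Then for every real λ ≠ 0 and every invertible T ∈ GL(2n,ℝ), the matrix f = T(ã λ^{2j+1} + σ₁(ã) λ^{−(2j+1)})T⁻¹ satisfies the polynomial identity (f − w̃₁(λ^{2j+1} + λ^{−(2j+1)})I)(f + w̃₁(λ^{2j+1} + λ^{−(2j+1)})I) · Π_{s=2}^{n} (f − w̃_s(λ^{2j+1} − λ^{−(2j+1)})I)(f + w̃_s(λ^{2j+1} − λ^{−(2j+1)})I) = 0. -/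
import Mathlib


/- STATEMENT 5: the characteristic-polynomial identity (E:characteristic) of Lemma 2.3:
   f = T(ã λ^{2j+1} + σ₁(ã) λ^{−(2j+1)})T⁻¹ satisfies
   (f − w̃₁(λ^{2j+1}+λ^{−(2j+1)})I)(f + w̃₁(λ^{2j+1}+λ^{−(2j+1)})I)
     · Π_{s=2}^n (f − w̃_s(λ^{2j+1}−λ^{−(2j+1)})I)(f + w̃_s(λ^{2j+1}−λ^{−(2j+1)})I) = 0.
   The product of commuting factors is expressed as the evaluation (aeval f) of the
   corresponding product of polynomials in ℝ[X], which is literally the stated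
   matrix product since aeval is a ring homomorphism. -/


noncomputable section

open Matrix Polynomial

/-- S = diag(−1,…,−1,1,…,1), n+1 entries −1 followed by n−1 entries 1, on Fin n ⊕ Fin n -/
def Smat (n : ℕ) : Matrix (Fin n ⊕ Fin n) (Fin n ⊕ Fin n) ℝ :=
  Matrix.diagonal (Sum.elim (fun _ => (-1 : ℝ)) (fun k => if (k : ℕ) = 0 then -1 else 1))

/-- σ₁(X) = S X S -/
def sigma1 {n : ℕ} (X : Matrix (Fin n ⊕ Fin n) (Fin n ⊕ Fin n) ℝ) :
    Matrix (Fin n ⊕ Fin n) (Fin n ⊕ Fin n) ℝ :=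
  Smat n * X * Smat n

/-- conjugation by a unit as an ℝ-algebra hom -/
def conjHom {A : Type*} [Ring A] [Algebra ℝ A] (u : Aˣ) : A →ₐ[ℝ] A where
  toFun x := ↑u * x * ↑u⁻¹
  map_one' := by simp
  map_mul' x y := by
    have h : (↑u⁻¹ : A) * ↑u = 1 := u.inv_mul
    calc ↑u * (x * y) * ↑u⁻¹ = ↑u * x * (1 * (y * ↑u⁻¹)) := by noncomm_ring
      _ = ↑u * x * ((↑u⁻¹ * ↑u) * (y * ↑u⁻¹)) := by rw [h]
      _ = (↑u * x * ↑u⁻¹) * (↑u * y * ↑u⁻¹) := by noncomm_ring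
  map_zero' := by simp
  map_add' x y := by noncomm_ring
  commutes' r := by
    simp only [Algebra.algebraMap_eq_smul_one]
    calc (↑u : A) * (r • (1:A)) * ↑u⁻¹ = r • ((↑u : A) * ↑u⁻¹) := by
          rw [mul_smul_comm, mul_one, smul_mul_assoc]
      _ = r • 1 := by rw [u.mul_inv]

theorem characteristic_identity (n j : ℕ) (hn : 0 < n) (w : Fin n → ℝ)
    (lam : ℝ) (hlam : lam ≠ 0)
    (T : Matrix (Fin n ⊕ Fin n) (Fin n ⊕ Fin n) ℝ) (hT : IsUnit T) :
    -- ã = [[0,D̃],[D̃,0]] with D̃ = diag(w̃₁,…,w̃_n)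
    ∀ atil : Matrix (Fin n ⊕ Fin n) (Fin n ⊕ Fin n) ℝ,
      atil = Matrix.fromBlocks 0 (Matrix.diagonal w) (Matrix.diagonal w) 0 →
    ∀ f : Matrix (Fin n ⊕ Fin n) (Fin n ⊕ Fin n) ℝ,
      f = T * (lam ^ (2*(j : ℤ)+1) • atil + lam ^ (-(2*(j : ℤ)+1)) • sigma1 atil) * T⁻¹ →
      (Polynomial.aeval f)
        ((X - C (w ⟨0, hn⟩ * (lam ^ (2*(j : ℤ)+1) + lam ^ (-(2*(j : ℤ)+1)))))
          * (X + C (w ⟨0, hn⟩ * (lam ^ (2*(j : ℤ)+1) + lam ^ (-(2*(j : ℤ)+1)))))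
          * ∏ s ∈ Finset.univ.erase (⟨0, hn⟩ : Fin n),
              ((X - C (w s * (lam ^ (2*(j : ℤ)+1) - lam ^ (-(2*(j : ℤ)+1)))))
                * (X + C (w s * (lam ^ (2*(j : ℤ)+1) - lam ^ (-(2*(j : ℤ)+1))))))) = 0 := by
  intro atil hatil f hf
  set μ : ℝ := lam ^ (2*(j : ℤ)+1) with hμ
  set ν : ℝ := lam ^ (-(2*(j : ℤ)+1)) with hν
  set u : Fin n → ℝ := fun i => if (i : ℕ) = 0 then w i * (μ + ν) else w i * (μ - ν) with hu
  set g : Matrix (Fin n ⊕ Fin n) (Fin n ⊕ Fin n) ℝ := μ • atil + ν • sigma1 atil with hg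
  -- σ₁(ã) as a block antidiagonal matrix
  have hsig : sigma1 atil =
      Matrix.fromBlocks 0
        (Matrix.diagonal (fun i : Fin n => if (i : ℕ) = 0 then w i else -w i))
        (Matrix.diagonal (fun i : Fin n => if (i : ℕ) = 0 then w i else -w i)) 0 := by
    subst hatil
    ext (i | i) (k | k) <;>
      simp only [sigma1, Smat, Matrix.mul_diagonal, Matrix.diagonal_mul,
        Matrix.fromBlocks_apply₁₁, Matrix.fromBlocks_apply₁₂, Matrix.fromBlocks_apply₂₁,
        Matrix.fromBlocks_apply₂₂, Sum.elim_inl, Sum.elim_inr, Matrix.zero_apply] <;>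
    · rcases eq_or_ne i k with h | h
      · subst h
        by_cases h0 : (i : ℕ) = 0 <;>
          simp [Matrix.diagonal_apply_eq, h0] <;> ring
      · simp [Matrix.diagonal_apply_ne _ h, h]
  have hgform : g = Matrix.fromBlocks 0 (Matrix.diagonal u) (Matrix.diagonal u) 0 := by
    rw [hg, hsig, hatil]
    ext (i | i) (k | k) <;>
      simp only [Matrix.add_apply, Matrix.smul_apply, Matrix.fromBlocks_apply₁₁,
        Matrix.fromBlocks_apply₁₂, Matrix.fromBlocks_apply₂₁, Matrix.fromBlocks_apply₂₂,
        Matrix.zero_apply, smul_zero, add_zero, smul_eq_mul, hu] <;>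
    · try
        rcases eq_or_ne i k with h | h
        · subst h
          by_cases h0 : (i : ℕ) = 0 <;>
            simp [Matrix.diagonal_apply_eq, h0] <;> ring
        · simp [Matrix.diagonal_apply_ne _ h]
  -- the polynomial as a full product over Fin n
  set P : Polynomial ℝ := ∏ s : Fin n, ((X - C (u s)) * (X + C (u s))) with hP
  have hzero : (⟨0, hn⟩ : Fin n) ∈ (Finset.univ : Finset (Fin n)) := Finset.mem_univ _
  have hu0 : u ⟨0, hn⟩ = w ⟨0, hn⟩ * (μ + ν) := by simp [hu]
  have hPeq :
      (X - C (w ⟨0, hn⟩ * (μ + ν))) * (X + C (w ⟨0, hn⟩ * (μ + ν)))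
        * ∏ s ∈ Finset.univ.erase (⟨0, hn⟩ : Fin n),
            ((X - C (w s * (μ - ν))) * (X + C (w s * (μ - ν)))) = P := by
    rw [hP, ← Finset.mul_prod_erase _ _ hzero, hu0]
    congr 1
    refine Finset.prod_congr rfl fun s hs => ?_
    have hs0 : (s : ℕ) ≠ 0 := fun h => (Finset.mem_erase.mp hs).1 (Fin.ext h)
    simp only [hu, if_neg hs0]
  rw [hPeq]
  -- P = Q.comp (X^2) where Q = ∏ (X − C (u s * u s))
  set Q : Polynomial ℝ := ∏ s : Fin n, (X - C (u s * u s)) with hQ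
  have hcomp : P = Q.comp (X ^ 2) := by
    rw [hP, hQ, Polynomial.prod_comp]
    refine Finset.prod_congr rfl fun s _ => ?_
    rw [Polynomial.sub_comp, Polynomial.X_comp, Polynomial.C_comp, C_mul]
    ring
  -- g² is diagonal
  set v : Fin n ⊕ Fin n → ℝ :=
    Sum.elim (fun i => u i * u i) (fun i => u i * u i) with hv
  have hsq : g ^ 2 = Matrix.diagonal v := by
    rw [hgform, sq, Matrix.fromBlocks_multiply]
    simp only [Matrix.mul_zero, Matrix.zero_mul, add_zero, zero_add,
      Matrix.diagonal_mul_diagonal]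
    rw [← Matrix.fromBlocks_diagonal]
  -- aeval P g = 0
  have hPg : (Polynomial.aeval g) P = 0 := by
    rw [hcomp, Polynomial.aeval_comp, map_pow, aeval_X, hsq]
    have hdiag : Matrix.diagonal v
        = Matrix.diagonalAlgHom (n := Fin n ⊕ Fin n) (α := ℝ) ℝ v := rfl
    rw [hdiag, Polynomial.aeval_algHom_apply]
    have hvz : (Polynomial.aeval v) Q = 0 := by
      funext idx
      rw [Polynomial.aeval_fn_apply, hQ, map_prod]
      rcases idx with i | i <;>
        refine Finset.prod_eq_zero (Finset.mem_univ i) ?_ <;>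
        simp [hv]
    rw [hvz, map_zero]
  -- conjugation by T
  obtain ⟨U, hU⟩ := hT
  have hUinv : T⁻¹ = ↑U⁻¹ := by rw [← hU, Matrix.coe_units_inv]
  have hfconj : f = conjHom U g := by
    rw [hf, hUinv, ← hU]; rfl
  rw [hfconj, Polynomial.aeval_algHom_apply, hPg, map_zero]

end
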